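/- The matrix q₁ := s·I_{n+1} + c·F₁ solves the principal symbol equation q₁² − b₁·q₁ + c₂ = 0, where b₁ := i(λ+μ)·[[0, (1/μ) ξ♯, 0], [(1/(λ+2μ)) ξᵀ, 0, 0], [0, 0, 0]] and c₂ := −[[s²·I_{n−1} + ((λ+μ)/μ) ξ♯ξᵀ, 0, 0], [0, (μ/(λ+2μ)) s², 0], [0, 0, s²]]. -/

import Mathlib

noncomputable section

open Matrix

/-- Block matrix `[[T, col, 0], [row, d, 0], [0, 0, e]]` of size `(n+1) × (n+1)`,
with blocks of sizes `n-1, 1, 1`. -/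
def blk (n : ℕ) (T : Fin (n-1) → Fin (n-1) → ℂ) (colv rowv : Fin (n-1) → ℂ)
    (d e : ℂ) : Matrix (Fin (n+1)) (Fin (n+1)) ℂ :=
  Matrix.of fun i j =>
    if hi : (i : ℕ) < n - 1 then
      if hj : (j : ℕ) < n - 1 then T ⟨i, hi⟩ ⟨j, hj⟩
      else if (j : ℕ) = n - 1 then colv ⟨i, hi⟩ else 0
    else if (i : ℕ) = n - 1 then
      if hj : (j : ℕ) < n - 1 then rowv ⟨j, hj⟩
      else if (j : ℕ) = n - 1 then d else 0
    else if (j : ℕ) = n then e else 0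

/-- The matrix `F₁ = [[(1/s)ξ♯ξᵀ, i ξ♯, 0], [i ξᵀ, −s, 0], [0, 0, 0]]`. -/
def F1mat (n : ℕ) (ξ ξs : Fin (n-1) → ℝ) (s : ℝ) :
    Matrix (Fin (n+1)) (Fin (n+1)) ℂ :=
  blk n (fun a b => ((1 / s * ξs a * ξ b : ℝ) : ℂ))
    (fun a => Complex.I * ((ξs a : ℝ) : ℂ))
    (fun b => Complex.I * ((ξ b : ℝ) : ℂ))
    ((-s : ℝ) : ℂ) 0

/-- The matrix `F₂ = [[(1/s)ξ♯ξᵀ, −i((λ+2μ)/μ) ξ♯, 0], [−i(μ/(λ+2μ)) ξᵀ, −s, 0], [0, 0, 0]]`. -/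
def F2mat (n : ℕ) (ξ ξs : Fin (n-1) → ℝ) (s lam mu : ℝ) :
    Matrix (Fin (n+1)) (Fin (n+1)) ℂ :=
  blk n (fun a b => ((1 / s * ξs a * ξ b : ℝ) : ℂ))
    (fun a => -(Complex.I * (((lam + 2*mu)/mu * ξs a : ℝ) : ℂ)))
    (fun b => -(Complex.I * ((mu/(lam + 2*mu) * ξ b : ℝ) : ℂ)))
    ((-s : ℝ) : ℂ) 0

/-- `b₁ = i(λ+μ)·[[0, (1/μ) ξ♯, 0], [(1/(λ+2μ)) ξᵀ, 0, 0], [0, 0, 0]]`. -/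
def b1mat (n : ℕ) (ξ ξs : Fin (n-1) → ℝ) (lam mu : ℝ) :
    Matrix (Fin (n+1)) (Fin (n+1)) ℂ :=
  (Complex.I * ((lam + mu : ℝ) : ℂ)) •
    blk n (fun _ _ => 0)
      (fun a => ((1/mu * ξs a : ℝ) : ℂ))
      (fun b => ((1/(lam + 2*mu) * ξ b : ℝ) : ℂ)) 0 0

/-- `c₂ = −[[s²·I + ((λ+μ)/μ) ξ♯ξᵀ, 0, 0], [0, (μ/(λ+2μ)) s², 0], [0, 0, s²]]`. -/
def c2mat (n : ℕ) (ξ ξs : Fin (n-1) → ℝ) (s lam mu : ℝ) :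
    Matrix (Fin (n+1)) (Fin (n+1)) ℂ :=
  -(blk n
      (fun a b => ((s^2 * (if a = b then 1 else 0) + (lam + mu)/mu * ξs a * ξ b : ℝ) : ℂ))
      (fun _ => 0) (fun _ => 0)
      ((mu/(lam + 2*mu) * s^2 : ℝ) : ℂ) ((s^2 : ℝ) : ℂ))

/-- The principal symbol `p₁` of the thermoelastic Dirichlet-to-Neumann map. -/
def p1mat (n : ℕ) (ξ ξs : Fin (n-1) → ℝ) (s lam mu al : ℝ) :
    Matrix (Fin (n+1)) (Fin (n+1)) ℂ :=
  blk n
    (fun a b => ((mu * s * (if a = b then 1 else 0)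
        + mu * (lam + mu)/((lam + 3*mu) * s) * ξs a * ξ b : ℝ) : ℂ))
    (fun a => -(Complex.I * ((2 * mu^2/(lam + 3*mu) * ξs a : ℝ) : ℂ)))
    (fun b => Complex.I * ((2 * mu^2/(lam + 3*mu) * ξ b : ℝ) : ℂ))
    ((2 * mu * (lam + 2*mu)/(lam + 3*mu) * s : ℝ) : ℂ)
    ((al * s : ℝ) : ℂ)

/-- `A = blockdiag(μ·I, λ+2μ, α)`. -/
def Amat (n : ℕ) (lam mu al : ℝ) : Matrix (Fin (n+1)) (Fin (n+1)) ℂ :=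
  blk n (fun a b => if a = b then ((mu : ℝ) : ℂ) else 0)
    (fun _ => 0) (fun _ => 0) ((lam + 2*mu : ℝ) : ℂ) ((al : ℝ) : ℂ)

/-- `d₁ = [[0, iμ ξ♯, 0], [iλ ξᵀ, 0, 0], [0, 0, 0]]`. -/
def d1mat (n : ℕ) (ξ ξs : Fin (n-1) → ℝ) (lam mu : ℝ) :
    Matrix (Fin (n+1)) (Fin (n+1)) ℂ :=
  blk n (fun _ _ => 0)
    (fun a => Complex.I * ((mu * ξs a : ℝ) : ℂ))
    (fun b => Complex.I * ((lam * ξ b : ℝ) : ℂ)) 0 0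

/-- `W = blockdiag(G⁻¹, 1, 1)`. -/
def Wmat (n : ℕ) (G : Matrix (Fin (n-1)) (Fin (n-1)) ℝ) :
    Matrix (Fin (n+1)) (Fin (n+1)) ℂ :=
  blk n (fun a b => ((G⁻¹ a b : ℝ) : ℂ)) (fun _ => 0) (fun _ => 0) 1 1


namespace Stmt4Aux

variable {m : ℕ}

def ι (m : ℕ) (a : Fin m) : Fin (m + 1 + 1) := ⟨a, by omega⟩
def κ (m : ℕ) : Fin (m + 1 + 1) := ⟨m, by omega⟩
def τ (m : ℕ) : Fin (m + 1 + 1) := ⟨m + 1, by omega⟩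

@[simp] lemma ι_eq_ι {a b : Fin m} : ι m a = ι m b ↔ a = b := by
  simp [ι, Fin.ext_iff]
@[simp] lemma ι_ne_κ {a : Fin m} : ι m a ≠ κ m := by
  have := a.isLt; simp [ι, κ, Fin.ext_iff]; omega
@[simp] lemma ι_ne_τ {a : Fin m} : ι m a ≠ τ m := by
  have := a.isLt; simp [ι, τ, Fin.ext_iff]; omega
@[simp] lemma κ_ne_ι {a : Fin m} : κ m ≠ ι m a := (ι_ne_κ).symm
@[simp] lemma τ_ne_ι {a : Fin m} : τ m ≠ ι m a := (ι_ne_τ).symm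
@[simp] lemma κ_ne_τ : κ m ≠ τ m := by simp [κ, τ, Fin.ext_iff]
@[simp] lemma τ_ne_κ : τ m ≠ κ m := by simp [κ, τ, Fin.ext_iff]

lemma fin3 (i : Fin (m + 1 + 1)) : (∃ a, i = ι m a) ∨ i = κ m ∨ i = τ m := by
  rcases lt_trichotomy (i:ℕ) m with h | h | h
  · exact Or.inl ⟨⟨i, h⟩, by simp [ι, Fin.ext_iff]⟩
  · exact Or.inr (Or.inl (by simp [κ, Fin.ext_iff, h]))
  · exact Or.inr (Or.inr (by have := i.isLt; simp [τ, Fin.ext_iff]; omega))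

variable (T : Fin m → Fin m → ℂ) (cv rv : Fin m → ℂ) (d e : ℂ)

@[simp] lemma blk_ιι (a b : Fin m) : blk (m+1) T cv rv d e (ι m a) (ι m b) = T a b := by
  simp [blk, ι, a.isLt, b.isLt]
@[simp] lemma blk_ικ (a : Fin m) : blk (m+1) T cv rv d e (ι m a) (κ m) = cv a := by
  simp [blk, ι, κ, a.isLt]
@[simp] lemma blk_ιτ (a : Fin m) : blk (m+1) T cv rv d e (ι m a) (τ m) = 0 := by
  simp [blk, ι, τ, a.isLt]
@[simp] lemma blk_κι (b : Fin m) : blk (m+1) T cv rv d e (κ m) (ι m b) = rv b := by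
  simp [blk, ι, κ, b.isLt]
@[simp] lemma blk_κκ : blk (m+1) T cv rv d e (κ m) (κ m) = d := by
  simp [blk, κ]
@[simp] lemma blk_κτ : blk (m+1) T cv rv d e (κ m) (τ m) = 0 := by
  simp [blk, κ, τ]
@[simp] lemma blk_τι (b : Fin m) : blk (m+1) T cv rv d e (τ m) (ι m b) = 0 := by
  have := b.isLt; simp [blk, ι, τ]; omega
@[simp] lemma blk_τκ : blk (m+1) T cv rv d e (τ m) (κ m) = 0 := by
  simp [blk, κ, τ]
@[simp] lemma blk_ττ : blk (m+1) T cv rv d e (τ m) (τ m) = e := by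
  simp [blk, τ]

lemma sum_split (f : Fin (m + 1 + 1) → ℂ) :
    ∑ k, f k = (∑ a : Fin m, f (ι m a)) + f (κ m) + f (τ m) := by
  rw [Fin.sum_univ_castSucc, Fin.sum_univ_castSucc]
  rfl

lemma F1_sq (ξ ξs : Fin (m+1-1) → ℝ) (s : ℝ) (hs : (s:ℂ) ≠ 0)
    (hK : ∑ k : Fin m, (ξ k : ℂ) * (ξs k : ℂ) = (s:ℂ)^2) :
    F1mat (m+1) ξ ξs s * F1mat (m+1) ξ ξs s = 0 := by
  ext i j
  rcases fin3 i with ⟨a, rfl⟩ | rfl | rfl <;> rcases fin3 j with ⟨b, rfl⟩ | rfl | rfl <;>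
    simp only [Matrix.mul_apply, sum_split, F1mat, blk_ιι, blk_ικ, blk_ιτ, blk_κι,
      blk_κκ, blk_κτ, blk_τι, blk_τκ, blk_ττ, Matrix.zero_apply, mul_zero, zero_mul,
      add_zero, zero_add, Finset.sum_const_zero]
  · -- (ι a, ι b)
    have hsum : (∑ x : Fin m, (((1 / s * ξs a * ξ x : ℝ)):ℂ) * (((1 / s * ξs x * ξ b : ℝ)):ℂ))
        = (1/(s:ℂ) * ξs a) * (1/(s:ℂ) * ξ b) * (s:ℂ)^2 := by
      rw [← hK, Finset.mul_sum]
      exact Finset.sum_congr rfl fun x _ => by push_cast; ring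
    rw [hsum]
    field_simp
    linear_combination ((ξs a : ℂ) * (ξ b : ℂ)) * Complex.I_sq
  · -- (ι a, κ)
    have hsum : (∑ x : Fin m, (((1 / s * ξs a * ξ x : ℝ)):ℂ) * (Complex.I * ((ξs x : ℝ):ℂ)))
        = (Complex.I * (1/(s:ℂ)) * ξs a) * (s:ℂ)^2 := by
      rw [← hK, Finset.mul_sum]
      exact Finset.sum_congr rfl fun x _ => by push_cast; ring
    rw [hsum]
    field_simp
    push_cast
    ring
  · -- (κ, ι b)
    have hsum : (∑ x : Fin m, (Complex.I * ((ξ x : ℝ):ℂ)) * (((1 / s * ξs x * ξ b : ℝ)):ℂ))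
        = (Complex.I * (1/(s:ℂ)) * ξ b) * (s:ℂ)^2 := by
      rw [← hK, Finset.mul_sum]
      exact Finset.sum_congr rfl fun x _ => by push_cast; ring
    rw [hsum]
    field_simp
    push_cast
    ring
  · -- (κ, κ)
    have hsum : (∑ x : Fin m, (Complex.I * ((ξ x : ℝ):ℂ)) * (Complex.I * ((ξs x : ℝ):ℂ)))
        = (-1 : ℂ) * (s:ℂ)^2 := by
      rw [← hK, Finset.mul_sum]
      exact Finset.sum_congr rfl fun x _ => by
        linear_combination ((ξ x : ℂ) * (ξs x : ℂ)) * Complex.I_sq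
    rw [hsum]
    push_cast
    ring

lemma b1_mul_F1 (ξ ξs : Fin (m+1-1) → ℝ) (s lam mu : ℝ) (hs : (s:ℂ) ≠ 0)
    (hmu : (mu:ℂ) ≠ 0) (h2 : (lam:ℂ) + 2*mu ≠ 0)
    (hK : ∑ k : Fin m, (ξ k : ℂ) * (ξs k : ℂ) = (s:ℂ)^2) :
    b1mat (m+1) ξ ξs lam mu * F1mat (m+1) ξ ξs s
      = blk (m+1)
          (fun a b => -(((lam:ℂ) + mu)/mu * ξs a * ξ b))
          (fun a => -(Complex.I * ((lam:ℂ) + mu) * s / mu * ξs a))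
          (fun b => Complex.I * ((lam:ℂ) + mu) * s / ((lam:ℂ) + 2*mu) * ξ b)
          (-(((lam:ℂ) + mu) * s^2 / ((lam:ℂ) + 2*mu))) 0 := by
  ext i j
  rcases fin3 i with ⟨a, rfl⟩ | rfl | rfl <;> rcases fin3 j with ⟨b, rfl⟩ | rfl | rfl <;>
    simp only [Matrix.mul_apply, sum_split, F1mat, b1mat, Matrix.smul_apply, smul_eq_mul,
      blk_ιι, blk_ικ, blk_ιτ, blk_κι, blk_κκ, blk_κτ, blk_τι, blk_τκ, blk_ττ,
      Matrix.zero_apply, mul_zero, zero_mul, add_zero, zero_add, Finset.sum_const_zero]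
  · -- (ι a, ι b)
    push_cast
    linear_combination (((lam:ℂ)+mu)/mu * ξs a * ξ b) * Complex.I_sq
  · -- (ι a, κ)
    push_cast
    ring
  · -- (κ, ι b)
    have hsum : (∑ x : Fin m,
        Complex.I * ((lam + mu : ℝ):ℂ) * (((1/(lam+2*mu) * ξ x : ℝ)):ℂ) * (((1/s*ξs x*ξ b : ℝ)):ℂ))
        = (Complex.I * ((lam:ℂ)+mu) * (1/((lam:ℂ)+2*mu)) * (1/(s:ℂ)) * ξ b) * (s:ℂ)^2 := by
      rw [← hK, Finset.mul_sum]
      exact Finset.sum_congr rfl fun x _ => by push_cast; ring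
    rw [hsum]
    field_simp
  · -- (κ, κ)
    have hsum : (∑ x : Fin m,
        Complex.I * ((lam + mu : ℝ):ℂ) * (((1/(lam+2*mu) * ξ x : ℝ)):ℂ) * (Complex.I * ((ξs x : ℝ):ℂ)))
        = (-(((lam:ℂ)+mu) * (1/((lam:ℂ)+2*mu)))) * (s:ℂ)^2 := by
      rw [← hK, Finset.mul_sum]
      exact Finset.sum_congr rfl fun x _ => by
        push_cast
        linear_combination ((((lam:ℂ)+mu) * (1/((lam:ℂ)+2*mu))) * ξ x * ξs x) * Complex.I_sq
    rw [hsum]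
    field_simp

end Stmt4Aux

/-- q₁ solves the principal symbol equation q₁² − b₁q₁ + c₂ = 0. -/
theorem stmt4 (n : ℕ) (hn : 2 ≤ n)
    (G : Matrix (Fin (n-1)) (Fin (n-1)) ℝ) (hG : G.PosDef)
    (ξ : Fin (n-1) → ℝ) (hξ : ξ ≠ 0)
    (ξs : Fin (n-1) → ℝ) (hξs : ξs = G.mulVec ξ)
    (s : ℝ) (hs : s = Real.sqrt (ξ ⬝ᵥ G.mulVec ξ))
    (lam mu : ℝ) (hmu : 0 < mu) (hlm : 0 ≤ lam + mu)
    (c : ℝ) (hc : c = (lam + mu)/(lam + 3*mu)) :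
    ((s : ℂ) • (1 : Matrix (Fin (n+1)) (Fin (n+1)) ℂ) + (c : ℂ) • F1mat n ξ ξs s) ^ 2
      - b1mat n ξ ξs lam mu
        * ((s : ℂ) • (1 : Matrix (Fin (n+1)) (Fin (n+1)) ℂ) + (c : ℂ) • F1mat n ξ ξs s)
      + c2mat n ξ ξs s lam mu = 0 := by
  obtain ⟨m, rfl⟩ : ∃ m, n = m + 1 := ⟨n - 1, by omega⟩
  open Stmt4Aux in
  have hq : (0:ℝ) < ξ ⬝ᵥ G.mulVec ξ := by simpa using hG.dotProduct_mulVec_pos hξ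
  have hspos : 0 < s := by rw [hs]; exact Real.sqrt_pos.mpr hq
  have hsC : (s:ℂ) ≠ 0 := by exact_mod_cast hspos.ne'
  have hmuC : (mu:ℂ) ≠ 0 := by exact_mod_cast hmu.ne'
  have h2R : (0:ℝ) < lam + 2*mu := by linarith
  have h3R : (0:ℝ) < lam + 3*mu := by linarith
  have h2C : (lam:ℂ) + 2*mu ≠ 0 := by
    have : ((lam + 2*mu : ℝ):ℂ) ≠ 0 := by exact_mod_cast h2R.ne'
    push_cast at this; exact this
  have h3C : (lam:ℂ) + 3*mu ≠ 0 := by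
    have : ((lam + 3*mu : ℝ):ℂ) ≠ 0 := by exact_mod_cast h3R.ne'
    push_cast at this; exact this
  have h3C' : (lam:ℂ) + mu * 3 ≠ 0 := by rwa [mul_comm]
  have h3C'' : (mu:ℂ) * 3 + lam ≠ 0 := by rwa [add_comm, mul_comm]
  have hK : ∑ k : Fin m, (ξ k : ℂ) * (ξs k : ℂ) = (s:ℂ)^2 := by
    have h1 : s^2 = ∑ k : Fin m, ξ k * ξs k := by
      rw [hs, Real.sq_sqrt hq.le, hξs]; rfl
    rw [← Complex.ofReal_pow, h1]
    push_cast
    rfl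
  have hF2 : F1mat (m+1) ξ ξs s * F1mat (m+1) ξ ξs s = 0 := F1_sq ξ ξs s hsC hK
  have hBF1 := b1_mul_F1 ξ ξs s lam mu hsC hmuC h2C hK
  rw [pow_two]
  have hq2 : ((s:ℂ) • (1 : Matrix (Fin (m+1+1)) (Fin (m+1+1)) ℂ) + (c:ℂ) • F1mat (m+1) ξ ξs s)
      * ((s:ℂ) • (1 : Matrix (Fin (m+1+1)) (Fin (m+1+1)) ℂ) + (c:ℂ) • F1mat (m+1) ξ ξs s)
      = ((s:ℂ)^2) • (1 : Matrix (Fin (m+1+1)) (Fin (m+1+1)) ℂ)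
        + (2*(s:ℂ)*(c:ℂ)) • F1mat (m+1) ξ ξs s := by
    simp only [Matrix.add_mul, Matrix.mul_add, Matrix.smul_mul, Matrix.mul_smul,
      Matrix.one_mul, Matrix.mul_one, hF2, smul_zero, add_zero, smul_smul]
    module
  have hbq : b1mat (m+1) ξ ξs lam mu
      * ((s:ℂ) • (1 : Matrix (Fin (m+1+1)) (Fin (m+1+1)) ℂ) + (c:ℂ) • F1mat (m+1) ξ ξs s)
      = (s:ℂ) • b1mat (m+1) ξ ξs lam mu
        + (c:ℂ) • (b1mat (m+1) ξ ξs lam mu * F1mat (m+1) ξ ξs s) := by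
    simp only [Matrix.mul_add, Matrix.mul_smul, Matrix.mul_one]
  rw [hq2, hbq, hBF1]
  subst hc
  ext i j
  rcases fin3 i with ⟨a, rfl⟩ | rfl | rfl <;> rcases fin3 j with ⟨b, rfl⟩ | rfl | rfl <;>
    simp only [Matrix.sub_apply, Matrix.add_apply, Matrix.smul_apply, Matrix.neg_apply,
      Matrix.one_apply, Matrix.zero_apply, smul_eq_mul, F1mat, b1mat, c2mat,
      blk_ιι, blk_ικ, blk_ιτ, blk_κι, blk_κκ, blk_κτ, blk_τι, blk_τκ, blk_ττ,
      ι_eq_ι, ι_ne_κ, ι_ne_τ, κ_ne_ι, τ_ne_ι, κ_ne_τ, τ_ne_κ, if_false,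
      mul_zero, zero_mul, add_zero, zero_add, mul_one, neg_zero, sub_zero, if_true, eq_self_iff_true]
  · -- (ι a, ι b)
    split_ifs with h <;> (push_cast; field_simp; ring)
  all_goals push_cast
  all_goals field_simp
  all_goals ring
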